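/- Let G be a finite group, x ∈ G, and K a normal subgroup of G contained in the hypercenter of G (i.e., K ≤ upperCentralSeries(G, n) for some n). Then nil_{G/K}(xK), the nilpotentizer of the coset xK in the quotient group G/K, is equal to the image of nil_G(x) under the canonical projection G → G/K. -/

import Mathlib

section

open Subgroup

/-- Upper central series of the ambient group intersected with a subgroup lies in the
upper central series of the subgroup. -/
lemma ucs_subgroupOf {G : Type*} [Group G] (H : Subgroup G) :
    ∀ n : ℕ, (Subgroup.upperCentralSeries G n).subgroupOf H ≤ Subgroup.upperCentralSeries H n := by
  intro n
  induction n with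
  | zero =>
    intro h hh
    simp only [Subgroup.upperCentralSeries_zero, mem_subgroupOf, Subgroup.mem_bot] at hh ⊢
    exact Subtype.ext hh
  | succ n ih =>
    intro h hh
    rw [Subgroup.mem_upperCentralSeries_succ_iff]
    intro y
    apply ih
    rw [mem_subgroupOf] at hh ⊢
    exact (Subgroup.mem_upperCentralSeries_succ_iff).mp hh y

/-- A group with a normal subgroup contained in some term of the upper central series,
such that the quotient is nilpotent, is itself nilpotent. -/
lemma nilpotent_of_quotient_hypercenter :
    ∀ n : ℕ, ∀ (G : Type _) [Group G] (K : Subgroup G) [K.Normal],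
      K ≤ Subgroup.upperCentralSeries G n → Group.IsNilpotent (G ⧸ K) → Group.IsNilpotent G := by
  intro n
  induction n with
  | zero =>
    intro G _ K _ hK hnil
    haveI := hnil
    exact Subgroup.isNilpotent_of_ker_le_center (QuotientGroup.mk' K)
      (by simpa [QuotientGroup.ker_mk'] using hK.trans bot_le)
  | succ n ih =>
    intro G _ K _ hK hnil
    set π := QuotientGroup.mk' (Subgroup.center G)
    have hK' : K ≤ (Subgroup.upperCentralSeries (G ⧸ Subgroup.center G) n).comap π := by
      rwa [Subgroup.comap_upperCentralSeries_quotient_center]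
    set K' := K.map π with hK'def
    haveI : K'.Normal := Subgroup.Normal.map ‹K.Normal› π (QuotientGroup.mk'_surjective _)
    have hle : K' ≤ Subgroup.upperCentralSeries (G ⧸ Subgroup.center G) n :=
      Subgroup.map_le_iff_le_comap.mpr hK'
    have hcomap : K ≤ K'.comap π := fun k hk => Subgroup.mem_comap.mpr (Subgroup.mem_map_of_mem _ hk)
    have hsurj : Function.Surjective (QuotientGroup.map K K' π hcomap) := by
      intro z
      obtain ⟨w, rfl⟩ := QuotientGroup.mk_surjective z
      obtain ⟨g, rfl⟩ := QuotientGroup.mk_surjective w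
      exact ⟨QuotientGroup.mk g, rfl⟩
    have hnil' : Group.IsNilpotent ((G ⧸ Subgroup.center G) ⧸ K') :=
      nilpotent_of_surjective _ hsurj
    have : Group.IsNilpotent (G ⧸ Subgroup.center G) := ih _ K' hle hnil'
    exact of_quotient_center_nilpotent this

end

/-- The nilpotentizer of `x` in `G`: the set of `y` such that `⟨x, y⟩` is nilpotent. -/
def nilpotentizer {G : Type*} [Group G] (x : G) : Set G :=
  {y | Group.IsNilpotent (Subgroup.closure ({x, y} : Set G))}

theorem stmt_4 {G : Type*} [Group G] [Finite G] (x : G) (K : Subgroup G) [K.Normal]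
    (hK : ∃ n : ℕ, K ≤ upperCentralSeries G n) :
    nilpotentizer ((x : G ⧸ K)) =
      (QuotientGroup.mk : G → G ⧸ K) '' nilpotentizer x := by
  obtain ⟨n, hKn⟩ := hK
  ext y'
  constructor
  · rintro (hy' : Group.IsNilpotent _)
    obtain ⟨y, rfl⟩ := QuotientGroup.mk_surjective y'
    set N : Subgroup (G ⧸ K) := Subgroup.closure {(x : G ⧸ K), (y : G ⧸ K)}
    set H : Subgroup G := N.comap (QuotientGroup.mk' K) with hH
    have hKH : K ≤ H := fun k hk => by
      simp only [hH, Subgroup.mem_comap, QuotientGroup.mk'_apply,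
        (QuotientGroup.eq_one_iff k).mpr hk]
      exact one_mem N
    have hclH : Subgroup.closure ({x, y} : Set G) ≤ H := by
      rw [Subgroup.closure_le]
      rintro z (rfl | rfl) <;>
        exact Subgroup.mem_comap.mpr (Subgroup.subset_closure (by simp))
    -- the restriction of the quotient map to H, with codomain N
    let ψ : H →* N := ((QuotientGroup.mk' K).comp H.subtype).codRestrict N (fun h => h.2)
    have hψsurj : Function.Surjective ψ := by
      rintro ⟨b, hb⟩
      obtain ⟨g, rfl⟩ := QuotientGroup.mk_surjective b
      exact ⟨⟨g, hb⟩, rfl⟩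
    have hker : ψ.ker = K.subgroupOf H := by
      ext h
      rw [MonoidHom.mem_ker, Subgroup.mem_subgroupOf, ← QuotientGroup.eq_one_iff (h : G)]
      exact Subtype.ext_iff
    have hnilN : Group.IsNilpotent N := hy'
    have hnilquot : Group.IsNilpotent (H ⧸ K.subgroupOf H) :=
      nilpotent_of_mulEquiv
        (((QuotientGroup.quotientKerEquivOfSurjective ψ hψsurj).symm).trans
          (QuotientGroup.quotientMulEquivOfEq hker))
    have hKle : K.subgroupOf H ≤ upperCentralSeries H n :=
      le_trans (fun h hh => Subgroup.mem_subgroupOf.mpr (hKn (Subgroup.mem_subgroupOf.mp hh)))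
        (ucs_subgroupOf H n)
    have hHnil : Group.IsNilpotent H :=
      nilpotent_of_quotient_hypercenter n H (K.subgroupOf H) hKle hnilquot
    have : Group.IsNilpotent (Subgroup.closure ({x, y} : Set G)) :=
      nilpotent_of_mulEquiv (Subgroup.subgroupOfEquivOfLe hclH)
    exact ⟨y, this, rfl⟩
  · rintro ⟨y, hy, rfl⟩
    have hmap : Subgroup.closure ({(x : G ⧸ K), (y : G ⧸ K)} : Set (G ⧸ K)) =
        (Subgroup.closure ({x, y} : Set G)).map (QuotientGroup.mk' K) := by
      rw [MonoidHom.map_closure]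
      congr 1
      simp [Set.image_insert_eq]
    show Group.IsNilpotent _
    rw [hmap]
    haveI : Group.IsNilpotent (Subgroup.closure ({x, y} : Set G)) := hy
    let φ : Subgroup.closure ({x, y} : Set G) →*
        (Subgroup.closure ({x, y} : Set G)).map (QuotientGroup.mk' K) :=
      ((QuotientGroup.mk' K).comp (Subgroup.closure ({x, y} : Set G)).subtype).codRestrict _
        (fun h => Subgroup.mem_map_of_mem _ h.2)
    have hφsurj : Function.Surjective φ := by
      rintro ⟨b, hb⟩
      obtain ⟨g, hg, rfl⟩ := hb
      exact ⟨⟨g, hg⟩, rfl⟩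
    exact nilpotent_of_surjective φ hφsurj
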